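/- arXiv:2408.03792 — 5 statements merged into one kernel-verified Lean document; each statement's English description precedes it below -/
import Mathlib

section
/- For all natural numbers n and k with 0 ≤ k ≤ n-1 (and n ≥ 1), the binomial coefficients satisfy (C(n,k))^2 ≥ C(n-1,k) · C(n+1,k). -/
/-- For all natural numbers `n ≥ 1` and `k ≤ n - 1`, the binomial coefficients
satisfy `C(n,k)^2 ≥ C(n-1,k) * C(n+1,k)`. -/
theorem choose_sq_ge_top_neighbors (n k : ℕ) (hn : 1 ≤ n) (hk : k ≤ n - 1) :
    (n - 1).choose k * (n + 1).choose k ≤ (n.choose k) ^ 2 := by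
  obtain ⟨m, rfl⟩ : ∃ m, n = m + 1 := ⟨n - 1, (Nat.succ_pred_eq_of_pos hn).symm⟩
  simp only [Nat.add_sub_cancel] at hk ⊢
  obtain ⟨j, rfl⟩ : ∃ j, m = k + j := ⟨m - k, (Nat.add_sub_cancel' hk).symm⟩
  have h1 := Nat.choose_mul_succ_eq (k + j) k
  have h2 := Nat.choose_mul_succ_eq (k + j + 1) k
  have e1 : k + j + 1 - k = j + 1 := by omega
  have e2 : k + j + 1 + 1 - k = j + 2 := by omega
  rw [e1] at h1
  rw [e2] at h2
  set A := (k + j).choose k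
  set B := (k + j + 1).choose k
  set C := (k + j + 1 + 1).choose k
  have hprod : A * C * ((k + j + 1) * (j + 2)) = B ^ 2 * ((j + 1) * (k + j + 2)) := by
    calc A * C * ((k + j + 1) * (j + 2)) = (A * (k + j + 1)) * (C * (j + 2)) := by ring
      _ = (B * (j + 1)) * (B * (k + j + 1 + 1)) := by rw [h1, ← h2]
      _ = B ^ 2 * ((j + 1) * (k + j + 2)) := by ring
  have hle : B ^ 2 * ((j + 1) * (k + j + 2)) ≤ B ^ 2 * ((k + j + 1) * (j + 2)) := by
    apply Nat.mul_le_mul_left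
    nlinarith
  have hpos : 0 < (k + j + 1) * (j + 2) := by positivity
  exact Nat.le_of_mul_le_mul_right (by omega) hpos
end

section
/- For natural numbers m1, m2, let a_{k,l} = C(m2,k)·C(m1+m2-k,l) for 0 ≤ k ≤ m2 and 0 ≤ l ≤ m1+m2-k (and a_{k,l} = 0 otherwise). Then for all integers k, l we have a_{k,l}^2 ≥ a_{k-1,l} · a_{k+1,l}. -/
/-- The coefficient `a_{k,l} = C(m2,k) * C(m1+m2-k,l)` of `x1^k x2^l` in
`(x2+1)^{m1} (x1+x2+1)^{m2}`, extended by `0` outside the range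
`0 ≤ k ≤ m2`, `0 ≤ l ≤ m1+m2-k`. -/
def clusterCoeff (m1 m2 : ℕ) (k l : ℤ) : ℕ :=
  if 0 ≤ k ∧ k ≤ (m2 : ℤ) ∧ 0 ≤ l ∧ l ≤ (m1 : ℤ) + m2 - k then
    m2.choose k.toNat * (m1 + m2 - k.toNat).choose l.toNat
  else 0

/-- Log-concavity of binomial coefficients in the lower index. -/
lemma choose_logConcave_lower (m j : ℕ) :
    m.choose j * m.choose (j + 2) ≤ (m.choose (j + 1)) ^ 2 := by
  rcases le_or_gt (j + 2) m with hm | hm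
  · have c1 : m.choose (j + 1) * (j + 1) = m.choose j * (m - j) :=
      Nat.choose_succ_right_eq m j
    have c2 : m.choose (j + 2) * (j + 2) = m.choose (j + 1) * (m - (j + 1)) :=
      Nat.choose_succ_right_eq m (j + 1)
    have hpos : 0 < (j + 2) * (m - j) := Nat.mul_pos (by omega) (by omega)
    refine Nat.le_of_mul_le_mul_right ?_ hpos
    calc m.choose j * m.choose (j + 2) * ((j + 2) * (m - j))
        = (m.choose j * (m - j)) * (m.choose (j + 2) * (j + 2)) := by ring
      _ = (m.choose (j + 1) * (j + 1)) * (m.choose (j + 1) * (m - (j + 1))) := by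
          rw [← c1, c2]
      _ = (m.choose (j + 1)) ^ 2 * ((j + 1) * (m - (j + 1))) := by ring
      _ ≤ (m.choose (j + 1)) ^ 2 * ((j + 2) * (m - j)) :=
          Nat.mul_le_mul_left _ (Nat.mul_le_mul (by omega) (by omega))
  · have h0 : m.choose (j + 2) = 0 := Nat.choose_eq_zero_of_lt hm
    simp [h0]

/-- Log-concavity of binomial coefficients in the upper index. -/
lemma choose_logConcave_upper (n L : ℕ) :
    n.choose L * (n + 2).choose L ≤ ((n + 1).choose L) ^ 2 := by
  rcases le_or_gt L n with hL | hL
  · have c1 : n.choose L * (n + 1) = (n + 1).choose L * (n + 1 - L) :=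
      Nat.choose_mul_succ_eq n L
    have c2 : (n + 1).choose L * (n + 2) = (n + 2).choose L * (n + 2 - L) :=
      Nat.choose_mul_succ_eq (n + 1) L
    have hpos : 0 < (n + 1) * (n + 2 - L) := Nat.mul_pos (by omega) (by omega)
    refine Nat.le_of_mul_le_mul_right ?_ hpos
    have hfac : (n + 1 - L) * (n + 2) ≤ (n + 1) * (n + 2 - L) := by
      obtain ⟨a, ha⟩ : ∃ a, n + 1 = a + L := ⟨n + 1 - L, by omega⟩
      have h1 : n + 1 - L = a := by omega
      have h2 : n + 2 - L = a + 1 := by omega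
      rw [h1, h2, ha]
      nlinarith
    calc n.choose L * (n + 2).choose L * ((n + 1) * (n + 2 - L))
        = (n.choose L * (n + 1)) * ((n + 2).choose L * (n + 2 - L)) := by ring
      _ = ((n + 1).choose L * (n + 1 - L)) * ((n + 1).choose L * (n + 2)) := by
          rw [c1, ← c2]
      _ = ((n + 1).choose L) ^ 2 * ((n + 1 - L) * (n + 2)) := by ring
      _ ≤ ((n + 1).choose L) ^ 2 * ((n + 1) * (n + 2 - L)) :=
          Nat.mul_le_mul_left _ hfac
  · have h0 : n.choose L = 0 := Nat.choose_eq_zero_of_lt hL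
    simp [h0]

/-- `a_{k,l}^2 ≥ a_{k-1,l} * a_{k+1,l}` for all integers `k, l`. -/
theorem clusterCoeff_logConcave_fst (m1 m2 : ℕ) (k l : ℤ) :
    clusterCoeff m1 m2 (k - 1) l * clusterCoeff m1 m2 (k + 1) l ≤
      (clusterCoeff m1 m2 k l) ^ 2 := by
  by_cases h1 : 0 ≤ k - 1 ∧ k - 1 ≤ (m2 : ℤ) ∧ 0 ≤ l ∧ l ≤ (m1 : ℤ) + m2 - (k - 1)
  · by_cases h2 : 0 ≤ k + 1 ∧ k + 1 ≤ (m2 : ℤ) ∧ 0 ≤ l ∧ l ≤ (m1 : ℤ) + m2 - (k + 1)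
    · have h3 : 0 ≤ k ∧ k ≤ (m2 : ℤ) ∧ 0 ≤ l ∧ l ≤ (m1 : ℤ) + m2 - k := by
        obtain ⟨a1, a2, a3, a4⟩ := h1
        obtain ⟨b1, b2, b3, b4⟩ := h2
        refine ⟨by omega, by omega, a3, by omega⟩
      obtain ⟨K, rfl⟩ : ∃ K : ℕ, k = (K : ℤ) := ⟨k.toNat, by omega⟩
      obtain ⟨L, rfl⟩ : ∃ L : ℕ, l = (L : ℤ) := ⟨l.toNat, by omega⟩
      have hK1 : 1 ≤ K := by omega
      have hK2 : K + 1 ≤ m2 := by exact_mod_cast h2.2.1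
      have hL : (L : ℤ) ≤ (m1 : ℤ) + m2 - (K + 1) := h2.2.2.2
      have hLn : L + K + 1 ≤ m1 + m2 := by omega
      simp only [clusterCoeff, if_pos h1, if_pos h2, if_pos h3]
      have e1 : ((K : ℤ) - 1).toNat = K - 1 := by omega
      have e2 : ((K : ℤ) + 1).toNat = K + 1 := by omega
      have e3 : (K : ℤ).toNat = K := by omega
      have e4 : (L : ℤ).toNat = L := by omega
      rw [e1, e2, e3, e4]
      obtain ⟨j, hj⟩ : ∃ j, K = j + 1 := ⟨K - 1, by omega⟩
      obtain ⟨n, hn⟩ : ∃ n, m1 + m2 - (K + 1) = n := ⟨m1 + m2 - (K + 1), rfl⟩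
      have f1 : K - 1 = j := by omega
      have f2 : m1 + m2 - j = n + 2 := by omega
      have f3 : m1 + m2 - K = n + 1 := by omega
      rw [f1, f2, f3, hn, hj]
      have hA := choose_logConcave_lower m2 j
      have hB := choose_logConcave_upper n L
      calc m2.choose j * (n + 2).choose L * (m2.choose (j + 1 + 1) * n.choose L)
          = (m2.choose j * m2.choose (j + 2)) * (n.choose L * (n + 2).choose L) := by
            ring_nf
        _ ≤ (m2.choose (j + 1)) ^ 2 * ((n + 1).choose L) ^ 2 := Nat.mul_le_mul hA hB
        _ = (m2.choose (j + 1) * (n + 1).choose L) ^ 2 := by ring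
    · simp only [clusterCoeff, if_neg h2, Nat.mul_zero]
      exact Nat.zero_le _
  · simp only [clusterCoeff, if_neg h1, Nat.zero_mul]
    exact Nat.zero_le _
end

section
/- The coefficient sequence (in each variable separately) of the polynomial (x2+1)^{m1} · (x1+x2+1)^{m2} in Z[x1,x2] is log-concave: writing the polynomial as ∑ a_{k,l} x1^k x2^l with a_{k,l} ≥ 0, one has a_{k,l}^2 ≥ a_{k-1,l}·a_{k+1,l} and a_{k,l}^2 ≥ a_{k,l-1}·a_{k,l+1} for all k,l. -/
open Finset

/-- The Laurent monomial with exponent vector `d` and coefficient `1`,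
as an element of the ring of multivariate Laurent polynomials
(the add-monoid algebra of `ℤ` over the group of exponent vectors). -/
noncomputable def Lmon (m : ℕ) (d : Fin m →₀ ℤ) : AddMonoidAlgebra ℤ (Fin m →₀ ℤ) :=
  AddMonoidAlgebra.single d 1

/-- The Laurent monomial `xᵢ^e`. -/
noncomputable def LX (m : ℕ) (i : Fin m) (e : ℤ) : AddMonoidAlgebra ℤ (Fin m →₀ ℤ) :=
  Lmon m (Finsupp.single i e)

/-- A multivariate Laurent polynomial is log-concave if its coefficients are
nonnegative and, in each variable separately, the square of every coefficient is
at least the product of its two neighboring coefficients. -/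
def IsLogConcave {m : ℕ} (f : AddMonoidAlgebra ℤ (Fin m →₀ ℤ)) : Prop :=
  (∀ d, 0 ≤ f.coeff d) ∧
  ∀ (j : Fin m) (d : Fin m →₀ ℤ),
    f.coeff (d - Finsupp.single j 1) * f.coeff (d + Finsupp.single j 1) ≤ (f.coeff d) ^ 2


lemma chooseA (n l : ℕ) : n.choose l * n.choose (l+2) ≤ n.choose (l+1) ^ 2 := by
  rcases le_or_gt (l+2) n with h | h
  · have h1 : n.choose (l+1) * (l+1) = n.choose l * (n - l) := Nat.choose_succ_right_eq n l
    have h2 : n.choose (l+2) * (l+2) = n.choose (l+1) * (n - (l+1)) :=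
      Nat.choose_succ_right_eq n (l+1)
    have key : n.choose l * n.choose (l+2) * ((l+2) * (n-l))
        = n.choose (l+1) ^ 2 * ((l+1) * (n - (l+1))) := by
      calc n.choose l * n.choose (l+2) * ((l+2) * (n-l))
          = (n.choose l * (n-l)) * (n.choose (l+2) * (l+2)) := by ring
        _ = (n.choose (l+1) * (l+1)) * (n.choose (l+1) * (n-(l+1))) := by rw [h1, h2]
        _ = n.choose (l+1) ^ 2 * ((l+1) * (n - (l+1))) := by ring
    have hle : (l+1) * (n - (l+1)) ≤ (l+2) * (n-l) :=
      Nat.mul_le_mul (by omega) (by omega)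
    have hpos : 0 < (l+2) * (n-l) := Nat.mul_pos (by omega) (by omega)
    exact Nat.le_of_mul_le_mul_right (key ▸ Nat.mul_le_mul_left _ hle) hpos
  · simp [Nat.choose_eq_zero_of_lt h]

lemma chooseB (n l : ℕ) : n.choose l * (n+2).choose l ≤ (n+1).choose l ^ 2 := by
  rcases le_or_gt l n with h | h
  · have h1 : n.choose l * (n+1) = (n+1).choose l * (n+1-l) := Nat.choose_mul_succ_eq n l
    have h2 : (n+1).choose l * (n+2) = (n+2).choose l * (n+2-l) := Nat.choose_mul_succ_eq (n+1) l
    have key : n.choose l * (n+2).choose l * ((n+1) * (n+2-l))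
        = (n+1).choose l ^ 2 * ((n+1-l) * (n+2)) := by
      calc n.choose l * (n+2).choose l * ((n+1) * (n+2-l))
          = (n.choose l * (n+1)) * ((n+2).choose l * (n+2-l)) := by ring
        _ = ((n+1).choose l * (n+1-l)) * ((n+1).choose l * (n+2)) := by rw [h1, ← h2]
        _ = (n+1).choose l ^ 2 * ((n+1-l) * (n+2)) := by ring
    have hle : (n+1-l) * (n+2) ≤ (n+1) * (n+2-l) := by
      zify [show l ≤ n+1 by omega, show l ≤ n+2 by omega]
      nlinarith
    have hpos : 0 < (n+1) * (n+2-l) := Nat.mul_pos (by omega) (by omega)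
    exact Nat.le_of_mul_le_mul_right (key ▸ Nat.mul_le_mul_left _ hle) hpos
  · simp [Nat.choose_eq_zero_of_lt h]

lemma LX_pow (m : ℕ) (i : Fin m) (n : ℕ) :
    (LX m i 1) ^ n = Lmon m (Finsupp.single i (n:ℤ)) := by
  rw [LX, Lmon, AddMonoidAlgebra.single_pow]
  congr 1
  · rw [Finsupp.smul_single]
    norm_num
  · exact one_pow n

lemma Lmon_mul (m : ℕ) (a b : Fin m →₀ ℤ) : Lmon m a * Lmon m b = Lmon m (a+b) := by
  rw [Lmon, Lmon, Lmon, AddMonoidAlgebra.single_mul_single, mul_one]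

lemma yexp (m1 : ℕ) (n : ℕ) :
    (LX 2 1 1 + 1) ^ n
      = ∑ l ∈ range (n+1), (n.choose l : ℤ) • Lmon 2 (Finsupp.single 1 (l:ℤ)) := by
  rw [add_pow]
  refine Finset.sum_congr rfl fun l hl => ?_
  rw [one_pow, mul_one, LX_pow]
  rw [zsmul_eq_mul]
  push_cast
  ring

lemma expand (m1 m2 : ℕ) :
    (LX 2 1 1 + 1) ^ m1 * (LX 2 0 1 + LX 2 1 1 + 1) ^ m2 =
    ∑ k ∈ range (m2+1), ∑ l ∈ range (m1+m2+1),
      ((m2.choose k * (m1+m2-k).choose l : ℕ) : ℤ) •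
        Lmon 2 (Finsupp.single 0 (k:ℤ) + Finsupp.single 1 (l:ℤ)) := by
  have hx : LX 2 0 1 + LX 2 1 1 + 1 = LX 2 0 1 + (LX 2 1 1 + 1) := by ring
  rw [hx, add_pow (LX 2 0 1) (LX 2 1 1 + 1) m2, Finset.mul_sum]
  refine Finset.sum_congr rfl fun k hk => ?_
  have hk' : k ≤ m2 := by simpa using Nat.lt_succ_iff.mp (Finset.mem_range.mp hk)
  have hnk : m1 + (m2 - k) = m1 + m2 - k := by omega
  have lhs_eq :
      (LX 2 1 1 + 1) ^ m1 * (LX 2 0 1 ^ k * (LX 2 1 1 + 1) ^ (m2 - k) * (m2.choose k : AddMonoidAlgebra ℤ (Fin 2 →₀ ℤ)))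
        = (m2.choose k : ℤ) • (LX 2 0 1 ^ k * (LX 2 1 1 + 1) ^ (m1 + m2 - k)) := by
    rw [← hnk, pow_add, zsmul_eq_mul]
    push_cast
    ring
  rw [lhs_eq, yexp m1 (m1+m2-k), Finset.mul_sum, Finset.smul_sum]
  rw [← Finset.sum_subset (Finset.range_subset_range.mpr (by omega : m1+m2-k+1 ≤ m1+m2+1))
    (fun l _ hl => ?_)]
  · refine Finset.sum_congr rfl fun l hl => ?_
    rw [LX_pow, mul_smul_comm, Lmon_mul, smul_smul]
    push_cast
    ring_nf
  · have : (m1+m2-k).choose l = 0 :=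
      Nat.choose_eq_zero_of_lt (by simp at hl ⊢; omega)
    simp [this]

lemma pair_eq (k l : ℤ) (d : Fin 2 →₀ ℤ) :
    (Finsupp.single (0:Fin 2) k + Finsupp.single 1 l) = d ↔ d 0 = k ∧ d 1 = l := by
  constructor
  · rintro rfl
    constructor <;> simp [Finsupp.single_apply]
  · rintro ⟨h0, h1⟩
    ext i
    fin_cases i <;> simp [Finsupp.single_apply, h0, h1]

lemma coeff_formula (m1 m2 : ℕ) (d : Fin 2 →₀ ℤ) :
    ((LX 2 1 1 + 1) ^ m1 * (LX 2 0 1 + LX 2 1 1 + 1) ^ m2).coeff d =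
    if 0 ≤ d 0 ∧ 0 ≤ d 1 then
      ((m2.choose (d 0).toNat * (m1 + m2 - (d 0).toNat).choose (d 1).toNat : ℕ) : ℤ)
    else 0 := by
  rw [expand]
  rw [AddMonoidAlgebra.coeff_sum, Finset.sum_apply']
  have inner : ∀ k : ℕ, (∑ l ∈ Finset.range (m1+m2+1),
      ((m2.choose k * (m1+m2-k).choose l : ℕ) : ℤ) •
        Lmon 2 (Finsupp.single 0 (k:ℤ) + Finsupp.single 1 (l:ℤ))).coeff d
      = ∑ l ∈ Finset.range (m1+m2+1),
        (if d 0 = (k:ℤ) ∧ d 1 = (l:ℤ) then ((m2.choose k * (m1+m2-k).choose l : ℕ) : ℤ) else 0) := by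
    intro k
    rw [AddMonoidAlgebra.coeff_sum, Finset.sum_apply']
    refine Finset.sum_congr rfl fun l hl => ?_
    rw [AddMonoidAlgebra.coeff_smul, Finsupp.smul_apply, Lmon, AddMonoidAlgebra.coeff_single, Finsupp.single_apply]
    simp only [pair_eq]
    split <;> simp
  simp only [inner]
  by_cases hd : 0 ≤ d 0 ∧ 0 ≤ d 1
  · obtain ⟨h0, h1⟩ := hd
    rw [if_pos ⟨h0, h1⟩]
    set K := (d 0).toNat with hK
    set L := (d 1).toNat with hL
    have e0 : ∀ k : ℕ, (d 0 = (k:ℤ)) ↔ k = K := by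
      intro k; omega
    have e1 : ∀ l : ℕ, (d 1 = (l:ℤ)) ↔ l = L := by
      intro l; omega
    simp only [e0, e1]
    rw [Finset.sum_comm]
    by_cases hKm : K < m2 + 1
    · have hin : ∀ l : ℕ, (∑ k ∈ Finset.range (m2+1),
          if k = K ∧ l = L then ((m2.choose k * (m1+m2-k).choose l : ℕ):ℤ) else 0)
          = if l = L then ((m2.choose K * (m1+m2-K).choose l : ℕ):ℤ) else 0 := by
        intro l
        simp only [ite_and]
        rw [Finset.sum_ite_eq' (Finset.range (m2+1)) K
          (fun k => if l = L then ((m2.choose k * (m1+m2-k).choose l : ℕ):ℤ) else 0),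
          if_pos (Finset.mem_range.mpr hKm)]
      simp only [hin]
      rw [Finset.sum_ite_eq' (Finset.range (m1+m2+1)) L
        (fun l => ((m2.choose K * (m1+m2-K).choose l : ℕ):ℤ))]
      by_cases hLm : L < m1 + m2 + 1
      · rw [if_pos (Finset.mem_range.mpr hLm)]
      · rw [if_neg (by simpa using hLm)]
        have : (m1+m2-K).choose L = 0 := Nat.choose_eq_zero_of_lt (by omega)
        simp [this]
    · have : m2.choose K = 0 := Nat.choose_eq_zero_of_lt (by omega)
      rw [Finset.sum_eq_zero fun l _ => Finset.sum_eq_zero fun k hk => ?_]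
      · simp [this]
      · rw [if_neg]
        rintro ⟨rfl, -⟩
        exact hKm (Finset.mem_range.mp hk)
  · rw [if_neg hd]
    refine Finset.sum_eq_zero fun k _ => Finset.sum_eq_zero fun l _ => ?_
    rw [if_neg]
    rintro ⟨e0, e1⟩
    exact hd ⟨by omega, by omega⟩

/-- The coefficient function. -/
def A (m1 m2 : ℕ) (k l : ℤ) : ℤ :=
  if 0 ≤ k ∧ 0 ≤ l then
    ((m2.choose k.toNat * (m1 + m2 - k.toNat).choose l.toNat : ℕ) : ℤ)
  else 0

lemma coeffA (m1 m2 : ℕ) (d : Fin 2 →₀ ℤ) :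
    ((LX 2 1 1 + 1) ^ m1 * (LX 2 0 1 + LX 2 1 1 + 1) ^ m2).coeff d = A m1 m2 (d 0) (d 1) :=
  coeff_formula m1 m2 d

lemma A_nonneg (m1 m2 : ℕ) (k l : ℤ) : 0 ≤ A m1 m2 k l := by
  unfold A; split
  · positivity
  · exact le_refl 0

lemma ineq0 (m1 m2 : ℕ) (k l : ℤ) :
    A m1 m2 (k-1) l * A m1 m2 (k+1) l ≤ A m1 m2 k l ^ 2 := by
  by_cases hl : 0 ≤ l
  · by_cases hk : 1 ≤ k
    · set K := k.toNat with hKdef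
      have hK1 : 1 ≤ K := by omega
      set L := l.toNat with hLdef
      by_cases hKm : K + 1 ≤ m2
      · have c1 : (0:ℤ) ≤ k - 1 := by omega
        have c2 : (0:ℤ) ≤ k + 1 := by omega
        have t1 : (k-1).toNat = K - 1 := by omega
        have t2 : (k+1).toNat = K + 1 := by omega
        rw [A, A, A, if_pos ⟨c1, hl⟩, if_pos ⟨c2, hl⟩, if_pos ⟨by omega, hl⟩, t1, t2]
        have hK2 : K - 1 + 1 = K := by omega
        have hK3 : K - 1 + 2 = K + 1 := by omega
        have A1 : ((m2.choose (K-1) : ℤ)) * (m2.choose (K+1) : ℤ) ≤ (m2.choose K : ℤ)^2 := by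
          have h := chooseA m2 (K-1)
          rw [hK2, hK3] at h
          exact_mod_cast h
        have s1 : m1 + m2 - (K+1) + 2 = m1 + m2 - (K-1) := by omega
        have s2 : m1 + m2 - (K+1) + 1 = m1 + m2 - K := by omega
        have B1 : ((m1+m2-(K+1)).choose L : ℤ) * ((m1+m2-(K-1)).choose L : ℤ)
            ≤ ((m1+m2-K).choose L : ℤ)^2 := by
          have h := chooseB (m1+m2-(K+1)) L
          rw [s1, s2] at h
          exact_mod_cast h
        push_cast
        nlinarith [mul_le_mul A1 B1 (by positivity) (by positivity),
          Int.natCast_nonneg (m2.choose (K-1)), Int.natCast_nonneg (m2.choose (K+1)),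
          Int.natCast_nonneg ((m1+m2-(K-1)).choose L), Int.natCast_nonneg ((m1+m2-(K+1)).choose L)]
      · have hz : A m1 m2 (k+1) l = 0 := by
          rw [A, if_pos ⟨by omega, hl⟩]
          have : (k+1).toNat = K + 1 := by omega
          rw [this]
          have : m2.choose (K+1) = 0 := Nat.choose_eq_zero_of_lt (by omega)
          simp [this]
        rw [hz, mul_zero]
        positivity
    · have hz : A m1 m2 (k-1) l = 0 := by
        rw [A, if_neg]; rintro ⟨h, -⟩; omega
      rw [hz, zero_mul]
      positivity
  · have hz : A m1 m2 (k-1) l = 0 := by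
      rw [A, if_neg]; rintro ⟨-, h⟩; omega
    rw [hz, zero_mul]
    positivity

lemma ineq1 (m1 m2 : ℕ) (k l : ℤ) :
    A m1 m2 k (l-1) * A m1 m2 k (l+1) ≤ A m1 m2 k l ^ 2 := by
  by_cases hk : 0 ≤ k
  · by_cases hl : 1 ≤ l
    · set K := k.toNat with hKdef
      set L := l.toNat with hLdef
      have hL1 : 1 ≤ L := by omega
      have t1 : (l-1).toNat = L - 1 := by omega
      have t2 : (l+1).toNat = L + 1 := by omega
      rw [A, A, A, if_pos ⟨hk, by omega⟩, if_pos ⟨hk, by omega⟩, if_pos ⟨hk, by omega⟩, t1, t2]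
      have hL2 : L - 1 + 1 = L := by omega
      have hL3 : L - 1 + 2 = L + 1 := by omega
      have A1 : (((m1+m2-K).choose (L-1) : ℤ)) * ((m1+m2-K).choose (L+1) : ℤ)
          ≤ ((m1+m2-K).choose L : ℤ)^2 := by
        have h := chooseA (m1+m2-K) (L-1)
        rw [hL2, hL3] at h
        exact_mod_cast h
      push_cast
      nlinarith [A1, Int.natCast_nonneg (m2.choose K),
        Int.natCast_nonneg ((m1+m2-K).choose (L-1)), Int.natCast_nonneg ((m1+m2-K).choose (L+1)),
        sq_nonneg ((m2.choose K : ℤ))]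
    · have hz : A m1 m2 k (l-1) = 0 := by
        rw [A, if_neg]; rintro ⟨-, h⟩; omega
      rw [hz, zero_mul]
      positivity
  · have hz : A m1 m2 k (l-1) = 0 := by
      rw [A, if_neg]; rintro ⟨h, -⟩; omega
    rw [hz, zero_mul]
    positivity


/-- The polynomial `(x2+1)^{m1} * (x1+x2+1)^{m2}` is log-concave in each variable. -/
theorem logConcave_A2_cluster_monomial_poly (m1 m2 : ℕ) :
    IsLogConcave ((LX 2 1 1 + 1) ^ m1 * (LX 2 0 1 + LX 2 1 1 + 1) ^ m2) := by
  constructor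
  · intro d
    rw [coeffA]
    exact A_nonneg m1 m2 _ _
  · intro j d
    rw [coeffA, coeffA, coeffA]
    have hj : j = 0 ∨ j = 1 := by omega
    rcases hj with rfl | rfl
    · have e1 : (d - Finsupp.single (0:Fin 2) (1:ℤ)) 0 = d 0 - 1 := by
        simp [Finsupp.sub_apply, Finsupp.add_apply, Finsupp.single_apply]
      have e2 : (d - Finsupp.single (0:Fin 2) (1:ℤ)) 1 = d 1 := by
        simp [Finsupp.sub_apply, Finsupp.add_apply, Finsupp.single_apply]
      have e3 : (d + Finsupp.single (0:Fin 2) (1:ℤ)) 0 = d 0 + 1 := by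
        simp [Finsupp.sub_apply, Finsupp.add_apply, Finsupp.single_apply]
      have e4 : (d + Finsupp.single (0:Fin 2) (1:ℤ)) 1 = d 1 := by
        simp [Finsupp.sub_apply, Finsupp.add_apply, Finsupp.single_apply]
      rw [e1, e2, e3, e4]
      exact ineq0 m1 m2 (d 0) (d 1)
    · have e1 : (d - Finsupp.single (1:Fin 2) (1:ℤ)) 0 = d 0 := by
        simp [Finsupp.sub_apply, Finsupp.add_apply, Finsupp.single_apply]
      have e2 : (d - Finsupp.single (1:Fin 2) (1:ℤ)) 1 = d 1 - 1 := by
        simp [Finsupp.sub_apply, Finsupp.add_apply, Finsupp.single_apply]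
      have e3 : (d + Finsupp.single (1:Fin 2) (1:ℤ)) 0 = d 0 := by
        simp [Finsupp.sub_apply, Finsupp.add_apply, Finsupp.single_apply]
      have e4 : (d + Finsupp.single (1:Fin 2) (1:ℤ)) 1 = d 1 + 1 := by
        simp [Finsupp.sub_apply, Finsupp.add_apply, Finsupp.single_apply]
      rw [e1, e2, e3, e4]
      exact ineq1 m1 m2 (d 0) (d 1)
end

section
/- For all natural numbers m1, m2, the Laurent polynomial ((x2+1)/x1)^{m1} · ((x1+x2+1)/(x1·x2))^{m2} in x1, x2 is log-concave. -/
section Binomials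

/-- Extended binomial coefficient. -/
noncomputable def B (n k : ℤ) : ℤ :=
  if 0 ≤ n ∧ 0 ≤ k then (n.toNat.choose k.toNat : ℤ) else 0

lemma B_nonneg (n k : ℤ) : 0 ≤ B n k := by
  unfold B; split <;> positivity

lemma B_cast (n k : ℕ) : B n k = (n.choose k : ℤ) := by
  simp [B]

lemma B_neg_n {n : ℤ} (h : n < 0) (k : ℤ) : B n k = 0 := by
  simp [B]; intro h'; omega

lemma B_neg_k (n : ℤ) {k : ℤ} (h : k < 0) : B n k = 0 := by
  simp [B]; intro h'; omega

lemma B_eq_zero_of_lt {n k : ℤ} (hn : 0 ≤ n) (h : n < k) : B n k = 0 := by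
  unfold B; split
  · next hh => norm_cast; exact Nat.choose_eq_zero_of_lt (by omega)
  · rfl

lemma B_zero_ne {x : ℤ} (hx : x ≠ 0) : B 0 x = 0 := by
  rcases lt_or_gt_of_ne hx with h | h
  · exact B_neg_k 0 h
  · exact B_eq_zero_of_lt le_rfl h

lemma B_ne_zero_ranges {n k : ℤ} (hn : 0 ≤ n) (h : B n k ≠ 0) : 0 ≤ k ∧ k ≤ n := by
  constructor
  · by_contra hk; exact h (B_neg_k n (by omega))
  · by_contra hk; exact h (B_eq_zero_of_lt hn (by omega))

lemma B_pascal {n : ℤ} (hn : 0 ≤ n) (k : ℤ) : B (n + 1) k = B n k + B n (k - 1) := by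
  lift n to ℕ using hn
  rcases lt_or_ge k 0 with hk | hk
  · rw [B_neg_k _ hk, B_neg_k _ hk, B_neg_k _ (by omega)]; ring
  lift k to ℕ using hk
  have hcast : ((n:ℤ) + 1) = ((n+1 : ℕ) : ℤ) := by push_cast; ring
  cases k with
  | zero =>
    have : B (↑n) ((0:ℕ) - 1 : ℤ) = 0 := B_neg_k _ (by norm_num)
    rw [this, add_zero, B, B, if_pos (by omega), if_pos (by omega)]
    norm_num
  | succ k' =>
    have h2 : ((k'+1:ℕ):ℤ) - 1 = ((k' : ℕ) : ℤ) := by push_cast; ring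
    rw [hcast, h2, B_cast, B_cast, B_cast, Nat.choose_succ_succ']
    push_cast; ring

lemma nat_lc_k (n k : ℕ) : n.choose k * n.choose (k+2) ≤ n.choose (k+1) ^ 2 := by
  rcases lt_or_ge n (k+1) with h | h
  · rw [Nat.choose_eq_zero_of_lt (show n < k+2 by omega)]; simp
  · have h1 := Nat.choose_succ_right_eq n k
    have h2 := Nat.choose_succ_right_eq n (k+1)
    zify at h1 h2 ⊢
    rw [Nat.cast_sub (by omega)] at h1
    rw [Nat.cast_sub (by omega)] at h2
    set c0 := (n.choose k : ℤ); set c1 := (n.choose (k+1) : ℤ); set c2 := (n.choose (k+2) : ℤ)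
    have hc0 : 0 ≤ c0 := Int.natCast_nonneg _
    have hc1 : 0 ≤ c1 := Int.natCast_nonneg _
    have hc2 : 0 ≤ c2 := Int.natCast_nonneg _
    have hn : (k:ℤ) + 1 ≤ n := by exact_mod_cast h
    have key : c0 * c2 * (((k:ℤ)+1)*((k:ℤ)+2)*((n:ℤ)-k)) ≤ c1^2 * (((k:ℤ)+1)*((k:ℤ)+2)*((n:ℤ)-k)) := by
      have e1 : c0 * c2 * (((k:ℤ)+1)*((k:ℤ)+2)*((n:ℤ)-k)) = c1^2 * (((k:ℤ)+1)*((k:ℤ)+1)*((n:ℤ)-(k+1))) := by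
        push_cast at h1 h2
        linear_combination (-(c2*((k:ℤ)+2)*((k:ℤ)+1))) * h1 + (c1*((k:ℤ)+1)^2) * h2
      rw [e1]
      have hsq : 0 ≤ c1^2 := sq_nonneg c1
      have : ((k:ℤ)+1)*((k:ℤ)+1)*((n:ℤ)-(k+1)) ≤ ((k:ℤ)+1)*((k:ℤ)+2)*((n:ℤ)-k) := by nlinarith
      exact mul_le_mul_of_nonneg_left this hsq
    have hpos : (0:ℤ) < ((k:ℤ)+1)*((k:ℤ)+2)*((n:ℤ)-k) := by
      have : (0:ℤ) < (n:ℤ)-k := by omega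
      positivity
    exact le_of_mul_le_mul_right key hpos

lemma nat_lc_n (n k : ℕ) : n.choose k * (n+2).choose k ≤ (n+1).choose k ^ 2 := by
  rcases lt_or_ge n k with h | h
  · rw [Nat.choose_eq_zero_of_lt h]; simp
  · have h1 := Nat.choose_mul_succ_eq n k
    have h2 := Nat.choose_mul_succ_eq (n+1) k
    zify at h1 h2 ⊢
    rw [Nat.cast_sub (by omega)] at h1
    rw [Nat.cast_sub (by omega)] at h2
    set c0 := (n.choose k : ℤ); set c1 := ((n+1).choose k : ℤ); set c2 := ((n+2).choose k : ℤ)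
    have hc0 : 0 ≤ c0 := Int.natCast_nonneg _
    have hc1 : 0 ≤ c1 := Int.natCast_nonneg _
    have hc2 : 0 ≤ c2 := Int.natCast_nonneg _
    have hn : (k:ℤ) ≤ n := by exact_mod_cast h
    have key : c0 * c2 * (((n:ℤ)+1)*((n:ℤ)+2-k)) ≤ c1^2 * (((n:ℤ)+1)*((n:ℤ)+2-k)) := by
      have e1 : c0 * c2 * (((n:ℤ)+1)*((n:ℤ)+2-k)) = c1^2 * (((n:ℤ)+1-k)*((n:ℤ)+2)) := by
        push_cast at h1 h2
        linear_combination (c2*((n:ℤ)+2-k)) * h1 + (-(c1*((n:ℤ)+1-k))) * h2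
      rw [e1]
      have hsq : 0 ≤ c1^2 := sq_nonneg c1
      have : ((n:ℤ)+1-k)*((n:ℤ)+2) ≤ ((n:ℤ)+1)*((n:ℤ)+2-k) := by nlinarith
      exact mul_le_mul_of_nonneg_left this hsq
    have hpos : (0:ℤ) < ((n:ℤ)+1)*((n:ℤ)+2-k) := by
      have : (0:ℤ) < (n:ℤ)+2-k := by omega
      positivity
    exact le_of_mul_le_mul_right key hpos

lemma B_lc_k (n k : ℤ) : B n (k - 1) * B n (k + 1) ≤ B n k ^ 2 := by
  rcases lt_or_ge n 0 with hn | hn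
  · rw [B_neg_n hn, B_neg_n hn]; positivity
  rcases lt_or_ge k 1 with hk | hk
  · rw [B_neg_k n (show k - 1 < 0 by omega), zero_mul]; exact sq_nonneg _
  · lift n to ℕ using hn
    obtain ⟨k', rfl⟩ : ∃ k' : ℕ, k = (k' : ℤ) + 1 := ⟨(k-1).toNat, by omega⟩
    have e1 : ((k':ℤ) + 1) - 1 = ((k' : ℕ) : ℤ) := by ring
    have e2 : ((k':ℤ) + 1) + 1 = ((k' + 2 : ℕ) : ℤ) := by push_cast; ring
    have e3 : ((k':ℤ) + 1) = ((k' + 1 : ℕ) : ℤ) := by push_cast; ring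
    rw [e1, e2, e3, B_cast, B_cast, B_cast]
    exact_mod_cast nat_lc_k n k'

lemma B_lc_n (n k : ℤ) : B (n - 1) k * B (n + 1) k ≤ B n k ^ 2 := by
  rcases lt_or_ge k 0 with hk | hk
  · rw [B_neg_k _ hk, B_neg_k _ hk]; positivity
  rcases lt_or_ge n 1 with hn | hn
  · rw [B_neg_n (show n - 1 < 0 by omega) k, zero_mul]; exact sq_nonneg _
  · lift k to ℕ using hk
    obtain ⟨n', rfl⟩ : ∃ n' : ℕ, n = (n' : ℤ) + 1 := ⟨(n-1).toNat, by omega⟩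
    have e1 : ((n':ℤ) + 1) - 1 = ((n' : ℕ) : ℤ) := by ring
    have e2 : ((n':ℤ) + 1) + 1 = ((n' + 2 : ℕ) : ℤ) := by push_cast; ring
    have e3 : ((n':ℤ) + 1) = ((n' + 1 : ℕ) : ℤ) := by push_cast; ring
    rw [e1, e2, e3, B_cast, B_cast, B_cast]
    exact_mod_cast nat_lc_n n' k

lemma B_step1 (m2 N : ℕ) (h : m2 ≤ N) (i j : ℤ) :
    B m2 i * B ((N:ℤ)+1-i) j = B m2 i * B ((N:ℤ)-i) (j-1) + B m2 i * B ((N:ℤ)-i) j := by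
  rcases eq_or_ne (B m2 i) 0 with h0 | h0
  · rw [h0]; ring
  · have hr := B_ne_zero_ranges (by positivity) h0
    have hc : (m2:ℤ) ≤ N := by exact_mod_cast h
    have hNi : (0:ℤ) ≤ (N:ℤ) - i := by omega
    rw [show (N:ℤ)+1-i = ((N:ℤ)-i)+1 by ring, B_pascal hNi, mul_add]; ring

lemma B_step (m2 N : ℕ) (h : m2 ≤ N) (i j : ℤ) :
    B ((m2:ℤ)+1) i * B ((N:ℤ)+1-i) j =
      B m2 (i-1) * B ((N:ℤ)+1-i) j +
        (B m2 i * B ((N:ℤ)-i) (j-1) + B m2 i * B ((N:ℤ)-i) j) := by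
  rw [B_pascal (show (0:ℤ) ≤ (m2:ℤ) by positivity) i, add_mul, B_step1 m2 N h i j]; ring

lemma G_lc0 (m2 : ℕ) (C i j : ℤ) :
    (B m2 (i - 1 + C) * B (-(i - 1)) j) * (B m2 (i + 1 + C) * B (-(i + 1)) j) ≤
      (B m2 (i + C) * B (-i) j) ^ 2 := by
  have h1 := B_lc_k m2 (i + C)
  have h2 := B_lc_n (-i) j
  have e1 : i - 1 + C = (i + C) - 1 := by ring
  have e2 : i + 1 + C = (i + C) + 1 := by ring
  have e3 : -(i - 1) = (-i) + 1 := by ring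
  have e4 : -(i + 1) = (-i) - 1 := by ring
  rw [e1, e2, e3, e4]
  calc (B m2 ((i+C) - 1) * B ((-i) + 1) j) * (B m2 ((i+C) + 1) * B ((-i) - 1) j)
      = (B m2 ((i+C) - 1) * B m2 ((i+C) + 1)) * (B ((-i) - 1) j * B ((-i) + 1) j) := by ring
    _ ≤ (B m2 (i+C)) ^ 2 * (B (-i) j) ^ 2 :=
        mul_le_mul h1 h2 (mul_nonneg (B_nonneg _ _) (B_nonneg _ _)) (sq_nonneg _)
    _ = (B m2 (i + C) * B (-i) j) ^ 2 := by ring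

lemma G_lc1 (m2 : ℕ) (n i : ℤ) (j : ℤ) :
    (B m2 i * B n (j - 1)) * (B m2 i * B n (j + 1)) ≤ (B m2 i * B n j) ^ 2 := by
  calc (B m2 i * B n (j - 1)) * (B m2 i * B n (j + 1))
      = (B m2 i) ^ 2 * (B n (j-1) * B n (j+1)) := by ring
    _ ≤ (B m2 i) ^ 2 * (B n j) ^ 2 := mul_le_mul_of_nonneg_left (B_lc_k n j) (sq_nonneg _)
    _ = (B m2 i * B n j) ^ 2 := by ring

end Binomials

section Algebra

noncomputable def P1 : AddMonoidAlgebra ℤ (Fin 2 →₀ ℤ) := LX 2 1 1 + 1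
noncomputable def P2 : AddMonoidAlgebra ℤ (Fin 2 →₀ ℤ) := LX 2 0 1 + LX 2 1 1 + 1

lemma mul_P1_apply (f : AddMonoidAlgebra ℤ (Fin 2 →₀ ℤ)) (d : Fin 2 →₀ ℤ) :
    (f * P1).coeff d = f.coeff (d - Finsupp.single (1:Fin 2) (1:ℤ)) + f.coeff d := by
  show ((f * (AddMonoidAlgebra.single (Finsupp.single (1:Fin 2) (1:ℤ)) 1 + 1) :
    AddMonoidAlgebra ℤ (Fin 2 →₀ ℤ))).coeff d = _
  rw [mul_add, mul_one, AddMonoidAlgebra.coeff_add, Finsupp.add_apply, AddMonoidAlgebra.coeff_mul_single_apply, mul_one]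
  simp only [sub_eq_add_neg]

lemma mul_P2_apply (f : AddMonoidAlgebra ℤ (Fin 2 →₀ ℤ)) (d : Fin 2 →₀ ℤ) :
    (f * P2).coeff d = f.coeff (d - Finsupp.single (0:Fin 2) (1:ℤ)) + (f.coeff (d - Finsupp.single (1:Fin 2) (1:ℤ)) + f.coeff d) := by
  show ((f * (AddMonoidAlgebra.single (Finsupp.single (0:Fin 2) (1:ℤ)) 1 +
      AddMonoidAlgebra.single (Finsupp.single (1:Fin 2) (1:ℤ)) 1 + 1) :
    AddMonoidAlgebra ℤ (Fin 2 →₀ ℤ))).coeff d = _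
  rw [mul_add, mul_add, mul_one, AddMonoidAlgebra.coeff_add, AddMonoidAlgebra.coeff_add, Finsupp.add_apply, Finsupp.add_apply,
    AddMonoidAlgebra.coeff_mul_single_apply, AddMonoidAlgebra.coeff_mul_single_apply, mul_one, mul_one, add_assoc]
  simp only [sub_eq_add_neg]

lemma sub0_0 (d : Fin 2 →₀ ℤ) : (d - Finsupp.single (0:Fin 2) (1:ℤ)) 0 = d 0 - 1 := by
  rw [Finsupp.sub_apply, Finsupp.single_eq_same]

lemma sub0_1 (d : Fin 2 →₀ ℤ) : (d - Finsupp.single (0:Fin 2) (1:ℤ)) 1 = d 1 := by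
  rw [Finsupp.sub_apply, Finsupp.single_eq_of_ne (by decide), sub_zero]

lemma sub1_0 (d : Fin 2 →₀ ℤ) : (d - Finsupp.single (1:Fin 2) (1:ℤ)) 0 = d 0 := by
  rw [Finsupp.sub_apply, Finsupp.single_eq_of_ne (by decide), sub_zero]

lemma sub1_1 (d : Fin 2 →₀ ℤ) : (d - Finsupp.single (1:Fin 2) (1:ℤ)) 1 = d 1 - 1 := by
  rw [Finsupp.sub_apply, Finsupp.single_eq_same]

lemma add0_0 (d : Fin 2 →₀ ℤ) : (d + Finsupp.single (0:Fin 2) (1:ℤ)) 0 = d 0 + 1 := by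
  rw [Finsupp.add_apply, Finsupp.single_eq_same]

lemma add0_1 (d : Fin 2 →₀ ℤ) : (d + Finsupp.single (0:Fin 2) (1:ℤ)) 1 = d 1 := by
  rw [Finsupp.add_apply, Finsupp.single_eq_of_ne (by decide), add_zero]

lemma add1_0 (d : Fin 2 →₀ ℤ) : (d + Finsupp.single (1:Fin 2) (1:ℤ)) 0 = d 0 := by
  rw [Finsupp.add_apply, Finsupp.single_eq_of_ne (by decide), add_zero]

lemma add1_1 (d : Fin 2 →₀ ℤ) : (d + Finsupp.single (1:Fin 2) (1:ℤ)) 1 = d 1 + 1 := by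
  rw [Finsupp.add_apply, Finsupp.single_eq_same]

lemma coeff_P2 (m2 : ℕ) : ∀ d : Fin 2 →₀ ℤ,
    (P2 ^ m2).coeff d = B m2 (d 0) * B ((m2:ℤ) - d 0) (d 1) := by
  induction m2 with
  | zero =>
    intro d
    rw [pow_zero, AddMonoidAlgebra.one_def, AddMonoidAlgebra.coeff_single, Finsupp.single_apply]
    by_cases hd : d = 0
    · subst hd
      rw [if_pos rfl]
      norm_num [B, Finsupp.coe_zero]
    · rw [if_neg (fun h => hd h.symm)]
      symm
      rw [show ((0:ℕ):ℤ) = 0 by norm_num]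
      by_cases h0 : d 0 = 0
      · have h1 : d 1 ≠ 0 := by
          intro h1; apply hd; ext a; fin_cases a
          · exact h0
          · exact h1
        rw [h0, sub_zero, B_zero_ne h1, mul_zero]
      · rw [B_zero_ne h0, zero_mul]
  | succ m ih =>
    intro d
    rw [pow_succ, mul_P2_apply, ih, ih, ih, sub0_0, sub0_1, sub1_0, sub1_1]
    have e0 : (m:ℤ) - (d 0 - 1) = (m:ℤ) + 1 - d 0 := by ring
    have e1 : ((m+1:ℕ):ℤ) = (m:ℤ) + 1 := by push_cast; ring
    have e2 : (m:ℤ) + 1 - d 0 = ((m:ℕ):ℤ) + 1 - d 0 := rfl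
    rw [e0, e1]
    rw [show (m:ℤ) - d 0 = ((m:ℕ):ℤ) - d 0 from rfl] at *
    exact (B_step m m le_rfl (d 0) (d 1)).symm

lemma coeff_F (m1 m2 : ℕ) : ∀ d : Fin 2 →₀ ℤ,
    (P1 ^ m1 * P2 ^ m2).coeff d = B m2 (d 0) * B ((m1:ℤ) + (m2:ℤ) - d 0) (d 1) := by
  induction m1 with
  | zero =>
    intro d
    rw [pow_zero, one_mul, coeff_P2]
    norm_num
  | succ m ih =>
    intro d
    have hmul : P1 ^ (m+1) * P2 ^ m2 = (P1 ^ m * P2 ^ m2) * P1 := by ring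
    rw [hmul, mul_P1_apply, ih, ih, sub1_0, sub1_1]
    have e1 : ((m+1:ℕ):ℤ) + (m2:ℤ) - d 0 = ((m+m2:ℕ):ℤ) + 1 - d 0 := by push_cast; ring
    have e2 : (m:ℤ) + (m2:ℤ) - d 0 = ((m+m2:ℕ):ℤ) - d 0 := by push_cast; ring
    rw [e1, e2]
    exact (B_step1 m2 (m+m2) (Nat.le_add_left _ _) (d 0) (d 1)).symm

lemma coeff_E (m1 m2 : ℕ) (d : Fin 2 →₀ ℤ) :
    ((((LX 2 1 1 + 1) * LX 2 0 (-1)) ^ m1 *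
      ((LX 2 0 1 + LX 2 1 1 + 1) * (LX 2 0 (-1) * LX 2 1 (-1))) ^ m2)).coeff d =
    B m2 (d 0 + ((m1:ℤ) + (m2:ℤ))) * B (-(d 0)) (d 1 + (m2:ℤ)) := by
  set a0 : Fin 2 →₀ ℤ := Finsupp.single 0 (-1) with ha0
  set a1 : Fin 2 →₀ ℤ := Finsupp.single 1 (-1) with ha1
  set D : Fin 2 →₀ ℤ := m1 • a0 + m2 • (a0 + a1) with hD
  have hE : (((LX 2 1 1 + 1) * LX 2 0 (-1)) ^ m1 *
      ((LX 2 0 1 + LX 2 1 1 + 1) * (LX 2 0 (-1) * LX 2 1 (-1))) ^ m2) =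
      (P1 ^ m1 * P2 ^ m2) * AddMonoidAlgebra.single D 1 := by
    show (P1 * AddMonoidAlgebra.single a0 1) ^ m1 *
      (P2 * (AddMonoidAlgebra.single a0 1 * AddMonoidAlgebra.single a1 1)) ^ m2 = _
    rw [AddMonoidAlgebra.single_mul_single, one_mul, mul_pow, mul_pow,
      AddMonoidAlgebra.single_pow, AddMonoidAlgebra.single_pow, one_pow, one_pow,
      mul_mul_mul_comm, AddMonoidAlgebra.single_mul_single, one_mul]
  rw [hE, AddMonoidAlgebra.coeff_mul_single_apply, mul_one, ← sub_eq_add_neg, coeff_F]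
  have hD0 : (d - D) 0 = d 0 + ((m1:ℤ) + (m2:ℤ)) := by
    rw [Finsupp.sub_apply, hD, Finsupp.add_apply, Finsupp.smul_apply, Finsupp.smul_apply,
      Finsupp.add_apply, ha0, ha1, Finsupp.single_eq_same, Finsupp.single_eq_of_ne (by decide)]
    push_cast
    ring
  have hD1 : (d - D) 1 = d 1 + (m2:ℤ) := by
    rw [Finsupp.sub_apply, hD, Finsupp.add_apply, Finsupp.smul_apply, Finsupp.smul_apply,
      Finsupp.add_apply, ha0, ha1, Finsupp.single_eq_same, Finsupp.single_eq_of_ne (by decide)]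
    push_cast
    ring
  rw [hD0, hD1, show (m1:ℤ) + (m2:ℤ) - (d 0 + ((m1:ℤ) + (m2:ℤ))) = -(d 0) by ring]

end Algebra

/-- The cluster monomial `((x2+1)/x1)^{m1} * ((x1+x2+1)/(x1*x2))^{m2}` of type `A₂`
is a log-concave Laurent polynomial. -/
theorem logConcave_A2_cluster_monomial_third (m1 m2 : ℕ) :
    IsLogConcave (((LX 2 1 1 + 1) * LX 2 0 (-1)) ^ m1 *
      ((LX 2 0 1 + LX 2 1 1 + 1) * (LX 2 0 (-1) * LX 2 1 (-1))) ^ m2) := by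
  constructor
  · intro d
    rw [coeff_E]
    exact mul_nonneg (B_nonneg _ _) (B_nonneg _ _)
  · intro j d
    have hj : j = 0 ∨ j = 1 := by revert j; decide
    rcases hj with rfl | rfl
    · rw [coeff_E, coeff_E, coeff_E, sub0_0, sub0_1, add0_0, add0_1]
      exact G_lc0 m2 ((m1:ℤ) + (m2:ℤ)) (d 0) (d 1 + (m2:ℤ))
    · rw [coeff_E, coeff_E, coeff_E, sub1_0, sub1_1, add1_0, add1_1]
      have e1 : d 1 - 1 + (m2:ℤ) = (d 1 + (m2:ℤ)) - 1 := by ring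
      have e2 : d 1 + 1 + (m2:ℤ) = (d 1 + (m2:ℤ)) + 1 := by ring
      rw [e1, e2]
      exact G_lc1 m2 (-(d 0)) (d 0 + ((m1:ℤ) + (m2:ℤ))) (d 1 + (m2:ℤ))
end

section
/- The Laurent polynomial (1 + 2·x2 + x2^2 + x1·x3)/(x1·x2·x3) in variables x1, x2, x3 is log-concave. -/
/-- The coefficient function of our Laurent polynomial, in coordinates. -/
def gcoef (a b c : ℤ) : ℤ :=
  if a = -1 ∧ b = -1 ∧ c = -1 then 1
  else if a = -1 ∧ b = 0 ∧ c = -1 then 2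
  else if a = -1 ∧ b = 1 ∧ c = -1 then 1
  else if a = 0 ∧ b = -1 ∧ c = 0 then 1
  else 0

lemma ama_add_apply (f g : AddMonoidAlgebra ℤ (Fin 3 →₀ ℤ)) (d : Fin 3 →₀ ℤ) :
    (f + g).coeff d = f.coeff d + g.coeff d := rfl

lemma ama_single_apply (u d : Fin 3 →₀ ℤ) (b : ℤ) :
    (AddMonoidAlgebra.single u b : AddMonoidAlgebra ℤ (Fin 3 →₀ ℤ)).coeff d = if u = d then b else 0 :=
  Finsupp.single_apply

lemma coeff_formula_s19 (d : Fin 3 →₀ ℤ) :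
    (((1 + 2 * LX 3 1 1 + (LX 3 1 1) ^ 2 + LX 3 0 1 * LX 3 2 1) *
      (LX 3 0 (-1) * LX 3 1 (-1) * LX 3 2 (-1)) : AddMonoidAlgebra ℤ (Fin 3 →₀ ℤ)).coeff d)
      = gcoef (d 0) (d 1) (d 2) := by
  unfold LX Lmon
  rw [show (1 : AddMonoidAlgebra ℤ (Fin 3 →₀ ℤ)) = AddMonoidAlgebra.single 0 1 from rfl]
  simp only [two_mul, sq, add_mul, AddMonoidAlgebra.single_mul_single, one_mul, mul_one, zero_add]
  have hA : ((Finsupp.single 0 (-1) + Finsupp.single 1 (-1)) + Finsupp.single 2 (-1) = d)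
      ↔ (d 0 = -1 ∧ d 1 = -1 ∧ d 2 = -1) := by
    constructor
    · rintro rfl; simp [Finsupp.single_apply]
    · rintro ⟨h0, h1, h2⟩; ext i; fin_cases i <;>
        simp_all [Finsupp.single_apply]
  have hB : (Finsupp.single 1 1 + ((Finsupp.single 0 (-1) + Finsupp.single 1 (-1)) + Finsupp.single 2 (-1)) = d)
      ↔ (d 0 = -1 ∧ d 1 = 0 ∧ d 2 = -1) := by
    constructor
    · rintro rfl; simp [Finsupp.single_apply]
    · rintro ⟨h0, h1, h2⟩; ext i; fin_cases i <;>
        simp_all [Finsupp.single_apply]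
  have hC : ((Finsupp.single 1 1 + Finsupp.single 1 1) + ((Finsupp.single 0 (-1) + Finsupp.single 1 (-1)) + Finsupp.single 2 (-1)) = d)
      ↔ (d 0 = -1 ∧ d 1 = 1 ∧ d 2 = -1) := by
    constructor
    · rintro rfl; simp [Finsupp.single_apply]
    · rintro ⟨h0, h1, h2⟩; ext i; fin_cases i <;>
        simp_all [Finsupp.single_apply]
  have hD : ((Finsupp.single 0 1 + Finsupp.single 2 1) + ((Finsupp.single 0 (-1) + Finsupp.single 1 (-1)) + Finsupp.single 2 (-1)) = d)
      ↔ (d 0 = 0 ∧ d 1 = -1 ∧ d 2 = 0) := by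
    constructor
    · rintro rfl; simp [Finsupp.single_apply]
    · rintro ⟨h0, h1, h2⟩; ext i; fin_cases i <;>
        simp_all [Finsupp.single_apply]
  simp only [ama_add_apply, ama_single_apply, hA, hB, hC, hD, gcoef]
  split_ifs <;> omega

lemma gnonneg (a b c : ℤ) : 0 ≤ gcoef a b c := by
  unfold gcoef; split_ifs <;> norm_num

lemma grangea (a b c : ℤ) (h : gcoef a b c ≠ 0) : -1 ≤ a ∧ a ≤ 0 := by
  unfold gcoef at h; split_ifs at h <;> first | omega | tauto

lemma grangeb (a b c : ℤ) (h : gcoef a b c ≠ 0) : -1 ≤ b ∧ b ≤ 1 := by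
  unfold gcoef at h; split_ifs at h <;> first | omega | tauto

lemma grangec (a b c : ℤ) (h : gcoef a b c ≠ 0) : -1 ≤ c ∧ c ≤ 0 := by
  unfold gcoef at h; split_ifs at h <;> first | omega | tauto

lemma gtop (a c : ℤ) (h : gcoef a 1 c ≠ 0) : a = -1 ∧ c = -1 := by
  unfold gcoef at h; split_ifs at h <;> first | omega | tauto

lemma gkey (a b c : ℤ) :
    gcoef a (b - 1) c * gcoef a (b + 1) c ≤ gcoef a b c ^ 2 := by
  rcases eq_or_ne (gcoef a (b - 1) c) 0 with h1 | h1
  · rw [h1, zero_mul]; positivity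
  rcases eq_or_ne (gcoef a (b + 1) c) 0 with h2 | h2
  · rw [h2, mul_zero]; positivity
  have hb1 := grangeb _ _ _ h1
  have hb2 := grangeb _ _ _ h2
  have hb : b = 0 := by omega
  subst hb
  have := gtop a c (by rwa [zero_add] at h2)
  obtain ⟨rfl, rfl⟩ := this
  norm_num [gcoef]

lemma gkeya (a b c : ℤ) :
    gcoef (a - 1) b c * gcoef (a + 1) b c ≤ gcoef a b c ^ 2 := by
  rcases eq_or_ne (gcoef (a - 1) b c) 0 with h1 | h1
  · rw [h1, zero_mul]; positivity
  rcases eq_or_ne (gcoef (a + 1) b c) 0 with h2 | h2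
  · rw [h2, mul_zero]; positivity
  have := grangea _ _ _ h1
  have := grangea _ _ _ h2
  omega

lemma gkeyc (a b c : ℤ) :
    gcoef a b (c - 1) * gcoef a b (c + 1) ≤ gcoef a b c ^ 2 := by
  rcases eq_or_ne (gcoef a b (c - 1)) 0 with h1 | h1
  · rw [h1, zero_mul]; positivity
  rcases eq_or_ne (gcoef a b (c + 1)) 0 with h2 | h2
  · rw [h2, mul_zero]; positivity
  have := grangec _ _ _ h1
  have := grangec _ _ _ h2
  omega

/-- The Laurent polynomial `(1 + 2*x2 + x2^2 + x1*x3) / (x1*x2*x3)` in `x1,x2,x3`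
is log-concave. -/
theorem logConcave_A3_cluster_variable :
    IsLogConcave ((1 + 2 * LX 3 1 1 + (LX 3 1 1) ^ 2 + LX 3 0 1 * LX 3 2 1) *
      (LX 3 0 (-1) * LX 3 1 (-1) * LX 3 2 (-1))) := by
  constructor
  · intro d
    rw [coeff_formula_s19]
    exact gnonneg _ _ _
  · intro j d
    rw [coeff_formula_s19, coeff_formula_s19, coeff_formula_s19]
    simp only [Finsupp.sub_apply, Finsupp.add_apply, Finsupp.single_apply]
    fin_cases j
    · simpa using gkeya (d 0) (d 1) (d 2)
    · simpa using gkey (d 0) (d 1) (d 2)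
    · simpa using gkeyc (d 0) (d 1) (d 2)
end
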